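/- Let u, v be words of the same length n with uv ≠ vu. Then neither uv nor vu is a factor of u^3, and neither is a factor of v^3. -/
import Mathlib

lemma factor_of_cube_sq {α : Type} (u w : List α) (hw : w.length = 2 * u.length)
    (hinf : w <:+: (u ++ u ++ u)) : ∃ r : List α, r.length = u.length ∧ w = r ++ r := by
  obtain ⟨a, b, hab⟩ := hinf
  have hlen := congrArg List.length hab
  simp [hw] at hlen
  have hk : a.length ≤ u.length := by omega
  set k := a.length with hkdef
  have ha : a = u.take k := by
    have h1 : (a ++ (w ++ b)).take k = (u ++ u ++ u).take k := by
      rw [← List.append_assoc, hab]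
    rw [List.take_left] at h1
    rw [List.append_assoc, List.take_append_of_le_length hk] at h1
    exact h1
  obtain ⟨t, d, htd, ht, hd⟩ : ∃ t d : List α, t ++ d = u ∧ t = u.take k ∧ d = u.drop k :=
    ⟨u.take k, u.drop k, List.take_append_drop k u, rfl, rfl⟩
  have hlt : t.length = k := by rw [ht]; simp [List.length_take]; omega
  have hld : d.length = u.length - k := by rw [hd]; simp
  rw [ha, ← ht] at hab
  rw [← htd] at hab
  have h2 : t ++ (w ++ b) = t ++ (d ++ ((t ++ d) ++ (t ++ d))) := by
    rw [← List.append_assoc, hab]; simp [List.append_assoc]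
  have h3 : w ++ b = (d ++ t) ++ (d ++ t) ++ d := by
    have := List.append_cancel_left h2
    rw [this]; simp [List.append_assoc]
  refine ⟨d ++ t, by simp; omega, ?_⟩
  exact List.append_inj_left h3 (by simp; omega)

theorem not_factor_of_cube {α : Type} (u v : List α)
    (hlen : u.length = v.length) (h : u ++ v ≠ v ++ u) :
    ¬ (u ++ v) <:+: (u ++ u ++ u) ∧ ¬ (v ++ u) <:+: (u ++ u ++ u) ∧
    ¬ (u ++ v) <:+: (v ++ v ++ v) ∧ ¬ (v ++ u) <:+: (v ++ v ++ v) := by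
  have huv : u = v → False := fun e => h (by rw [e])
  refine ⟨?_, ?_, ?_, ?_⟩
  · intro hinf
    obtain ⟨r, hr, he⟩ := factor_of_cube_sq u (u ++ v) (by simp; omega) hinf
    have h1 : u = r := List.append_inj_left he hr.symm
    have h2 : v = r := List.append_inj_right he hr.symm
    exact huv (h1.trans h2.symm)
  · intro hinf
    obtain ⟨r, hr, he⟩ := factor_of_cube_sq u (v ++ u) (by simp; omega) hinf
    have h1 : v = r := List.append_inj_left he (by omega)
    have h2 : u = r := List.append_inj_right he (by omega)
    exact huv (h2.trans h1.symm)
  · intro hinf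
    obtain ⟨r, hr, he⟩ := factor_of_cube_sq v (u ++ v) (by simp; omega) hinf
    have h1 : u = r := List.append_inj_left he (by omega)
    have h2 : v = r := List.append_inj_right he (by omega)
    exact huv (h1.trans h2.symm)
  · intro hinf
    obtain ⟨r, hr, he⟩ := factor_of_cube_sq v (v ++ u) (by simp; omega) hinf
    have h1 : v = r := List.append_inj_left he (by omega)
    have h2 : u = r := List.append_inj_right he (by omega)
    exact huv (h2.trans h1.symm)
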